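/- arXiv:1210.2866 — 8 statements merged into one kernel-verified Lean document; each statement's English description precedes it below -/
import Mathlib

section
/- For all x ≥ 0 and all λ with 0 ≤ λ ≤ 1, it holds that log((1+λx)/(1+x)^λ) ≤ (λ(1-λ)/2)·x². -/
open Real Set

/-- For all `x ≥ 0` and `λ ∈ [0,1]`, `log((1+λx)/(1+x)^λ) ≤ (λ(1-λ)/2)·x²`. -/
theorem log_ratio_le_of_mem_unitInterval (x : ℝ) (hx : 0 ≤ x) (l : ℝ)
    (hl0 : 0 ≤ l) (hl1 : l ≤ 1) :
    Real.log ((1 + l * x) / (1 + x) ^ l) ≤ l * (1 - l) / 2 * x ^ 2 := by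
  have h1x : (0:ℝ) < 1 + x := by linarith
  have h1lx : (0:ℝ) < 1 + l * x := by nlinarith
  rw [Real.log_div (by positivity) (by positivity), Real.log_rpow h1x]
  set f : ℝ → ℝ := fun t => l * (1-l)/2 * t^2 + l * Real.log (1+t) - Real.log (1 + l*t) with hf
  have hderiv : ∀ t : ℝ, 0 ≤ t →
      HasDerivAt f (l*(1-l)*t + l * (1/(1+t)) - l * (1/(1+l*t))) t := by
    intro t ht
    have h1t : (0:ℝ) < 1 + t := by linarith
    have h1lt : (0:ℝ) < 1 + l*t := by nlinarith
    have d1 : HasDerivAt (fun t : ℝ => l*(1-l)/2 * t^2) (l*(1-l)*t) t := by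
      have := (hasDerivAt_pow 2 t).const_mul (l*(1-l)/2)
      exact this.congr_deriv (by norm_num; ring)
    have d2 : HasDerivAt (fun t : ℝ => Real.log (1+t)) (1/(1+t)) t := by
      have := ((hasDerivAt_id t).const_add 1).log h1t.ne'
      simpa using this
    have d3 : HasDerivAt (fun t : ℝ => Real.log (1+l*t)) (l * (1/(1+l*t))) t := by
      have h : HasDerivAt (fun t : ℝ => 1 + l*t) l t := by
        simpa using ((hasDerivAt_id t).const_mul l).const_add 1
      have := h.log h1lt.ne'
      convert this using 1; field_simp
    exact (d1.add (d2.const_mul l)).sub d3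
  have hmono : MonotoneOn f (Ici (0:ℝ)) := by
    apply monotoneOn_of_deriv_nonneg (convex_Ici 0)
    · apply ContinuousOn.sub
      · apply ContinuousOn.add (Continuous.continuousOn (by continuity))
        apply ContinuousOn.mul continuousOn_const
        apply ContinuousOn.log (by fun_prop)
        intro t ht; simp only [mem_Ici] at ht; nlinarith
      · apply ContinuousOn.log (by fun_prop)
        intro t ht; simp only [mem_Ici] at ht; nlinarith
    · intro t ht
      rw [interior_Ici] at ht
      exact ((hderiv t (le_of_lt ht)).differentiableAt).differentiableWithinAt
    · intro t ht
      rw [interior_Ici, mem_Ioi] at ht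
      have h1t : (0:ℝ) < 1 + t := by linarith [ht.le]
      have h1lt : (0:ℝ) < 1 + l*t := by nlinarith [ht.le]
      rw [(hderiv t ht.le).deriv]
      have heq : l*(1-l)*t + l * (1/(1+t)) - l * (1/(1+l*t))
          = l*(1-l)*t*((1+t)*(1+l*t)-1)/((1+t)*(1+l*t)) := by
        field_simp; ring
      rw [heq]
      apply div_nonneg _ (by positivity)
      have h2 : (0:ℝ) ≤ (1+t)*(1+l*t)-1 := by nlinarith [ht.le]
      have h3 : (0:ℝ) ≤ l*(1-l)*t := mul_nonneg (mul_nonneg hl0 (by linarith)) (le_of_lt ht)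
      exact mul_nonneg h3 h2
  have h0 : f 0 = 0 := by simp [hf]
  have := hmono (self_mem_Ici) (mem_Ici.mpr hx) hx
  rw [h0] at this
  simp only [hf] at this
  linarith
end

section
/- For all x ≥ 0 and all a ≥ 1, it holds that log((1+x)^a/(1+ax)) ≤ (a(a-1)/2)·x². -/
/-- For all `x ≥ 0` and `a ≥ 1`, `log((1+x)^a/(1+ax)) ≤ (a(a-1)/2)·x²`. -/
theorem log_rpow_ratio_le (x : ℝ) (hx : 0 ≤ x) (a : ℝ) (ha : 1 ≤ a) :
    Real.log ((1 + x) ^ a / (1 + a * x)) ≤ a * (a - 1) / 2 * x ^ 2 := by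
  have ha0 : (0:ℝ) < a := lt_of_lt_of_le one_pos ha
  set g : ℝ → ℝ := fun t => a * (a - 1) / 2 * t ^ 2 + Real.log (1 + a * t)
      - a * Real.log (1 + t) with hg
  have hderiv : ∀ t : ℝ, 0 ≤ t →
      HasDerivAt g (a * (a - 1) / 2 * (2 * t) + a / (1 + a * t) - a * (1 / (1 + t))) t := by
    intro t ht
    have h1 : (0:ℝ) < 1 + a * t := by nlinarith
    have h2 : (0:ℝ) < 1 + t := by linarith
    have d1 : HasDerivAt (fun t : ℝ => a * (a - 1) / 2 * t ^ 2)
        (a * (a - 1) / 2 * (2 * t)) t := by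
      simpa using (hasDerivAt_pow 2 t).const_mul (a * (a - 1) / 2)
    have d2 : HasDerivAt (fun t : ℝ => Real.log (1 + a * t)) (a / (1 + a * t)) t := by
      have : HasDerivAt (fun t : ℝ => 1 + a * t) a t := by
        simpa using ((hasDerivAt_id t).const_mul a).const_add (1:ℝ)
      simpa using this.log h1.ne'
    have d3 : HasDerivAt (fun t : ℝ => a * Real.log (1 + t)) (a * (1 / (1 + t))) t := by
      have : HasDerivAt (fun t : ℝ => 1 + t) 1 t := by
        simpa using (hasDerivAt_id t).const_add (1:ℝ)
      simpa using (this.log h2.ne').const_mul a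
    exact (d1.add d2).sub d3
  have hmono : MonotoneOn g (Set.Ici 0) := by
    apply monotoneOn_of_deriv_nonneg (convex_Ici 0)
    · exact fun t ht => ((hderiv t ht).differentiableAt.continuousAt).continuousWithinAt
    · intro t ht
      rw [interior_Ici] at ht
      exact (hderiv t (le_of_lt ht)).differentiableAt.differentiableWithinAt
    · intro t ht
      rw [interior_Ici] at ht
      have ht' : 0 < t := ht
      rw [(hderiv t ht'.le).deriv]
      have h1 : (0:ℝ) < 1 + a * t := by nlinarith
      have h2 : (0:ℝ) < 1 + t := by linarith
      have key : a * (1 / (1 + t)) - a / (1 + a * t)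
          = a * (a - 1) * t / ((1 + a * t) * (1 + t)) := by
        field_simp; ring
      have hden : (0:ℝ) < (1 + a * t) * (1 + t) := mul_pos h1 h2
      have hnum : 0 ≤ a * (a - 1) * t :=
        mul_nonneg (mul_nonneg ha0.le (sub_nonneg.mpr ha)) ht'.le
      have hle : a * (a - 1) * t / ((1 + a * t) * (1 + t)) ≤ a * (a - 1) * t := by
        apply div_le_self hnum
        nlinarith
      nlinarith [hle, key]
  have hg0 : g 0 = 0 := by simp [hg]
  have hgx : 0 ≤ g x := by
    rw [← hg0]
    exact hmono (Set.mem_Ici.mpr le_rfl) (Set.mem_Ici.mpr hx) hx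
  have h1 : (0:ℝ) < 1 + x := by linarith
  have h2 : (0:ℝ) < 1 + a * x := by nlinarith
  rw [Real.log_div (by positivity) h2.ne', Real.log_rpow h1]
  simp only [hg] at hgx
  nlinarith [hgx]
end

section
/- For all x ≥ 0 and all λ with 0 ≤ λ ≤ 1, it holds that 0 ≤ (1+λx) − (1+x)^λ ≤ (λ(1-λ)/2)·x². -/
open Real Set

private lemma key_deriv_ineq {l t : ℝ} (hl0 : 0 ≤ l) (hl1 : l ≤ 1) (ht : 0 ≤ t) :
    1 - (1 - l) * t ≤ (1 + t) ^ (l - 1) := by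
  have h1t : (0:ℝ) < 1 + t := by linarith
  set u := (1 - l) * t with hu
  have hu0 : 0 ≤ u := mul_nonneg (by linarith) ht
  have hA : (1 + t) ^ (1 - l) ≤ 1 + u := by
    simpa [hu] using rpow_one_add_le_one_add_mul_self (by linarith : (-1:ℝ) ≤ t)
      (by linarith : (0:ℝ) ≤ 1 - l) (by linarith : (1:ℝ) - l ≤ 1)
  have hpos : (0:ℝ) < (1 + t) ^ (1 - l) := rpow_pos_of_pos h1t _
  have hinv : (1 + u)⁻¹ ≤ ((1 + t) ^ (1 - l))⁻¹ :=
    inv_anti₀ hpos hA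
  have hrw : (1 + t) ^ (l - 1) = ((1 + t) ^ (1 - l))⁻¹ := by
    rw [← rpow_neg h1t.le]; ring_nf
  rw [hrw]
  refine le_trans ?_ hinv
  have h1u : (0:ℝ) < 1 + u := by linarith
  have hm : (1 + u) * (1 + u)⁻¹ = 1 := mul_inv_cancel₀ h1u.ne'
  nlinarith [mul_nonneg (mul_nonneg hu0 hu0) (inv_pos.mpr h1u).le, hm]

/-- For `x ≥ 0`, `λ ∈ [0,1]`: `0 ≤ (1+λx) − (1+x)^λ ≤ (λ(1-λ)/2)·x²`. -/
theorem sub_rpow_bounds (x : ℝ) (hx : 0 ≤ x) (l : ℝ) (hl0 : 0 ≤ l) (hl1 : l ≤ 1) :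
    0 ≤ (1 + l * x) - (1 + x) ^ l ∧ (1 + l * x) - (1 + x) ^ l ≤ l * (1 - l) / 2 * x ^ 2 := by
  constructor
  · have := rpow_one_add_le_one_add_mul_self (by linarith : (-1:ℝ) ≤ x) hl0 hl1
    linarith
  · -- monotonicity of g t = l(1-l)/2 t² + (1+t)^l - (1+lt)
    set g : ℝ → ℝ := fun t => l * (1 - l) / 2 * t ^ 2 + (1 + t) ^ l - (1 + l * t) with hg
    have hmono : MonotoneOn g (Ici 0) := by
      apply monotoneOn_of_deriv_nonneg (convex_Ici 0)
      · apply ContinuousOn.sub (ContinuousOn.add (by fun_prop) ?_) (by fun_prop)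
        intro t ht
        exact (Real.continuousAt_rpow_const _ _ (Or.inl (by simp at ht; positivity))).comp
          (by fun_prop) |>.continuousWithinAt
      · rw [interior_Ici]
        intro t ht
        have h1t : (0:ℝ) < 1 + t := by have := mem_Ioi.mp ht; linarith
        have h1 : HasDerivAt (fun t : ℝ => (1 + t) ^ l) (l * (1 + t) ^ (l - 1)) t := by
          have := (Real.hasDerivAt_rpow_const (x := 1 + t) (p := l)
            (Or.inl h1t.ne')).comp t ((hasDerivAt_id t).const_add 1)
          simpa [Function.comp_def] using this
        have h2 : HasDerivAt (fun t : ℝ => l * (1 - l) / 2 * t ^ 2)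
            (l * (1 - l) / 2 * (2 * t)) t := by
          simpa using (hasDerivAt_pow 2 t).const_mul (l * (1 - l) / 2)
        have h3 : HasDerivAt (fun t : ℝ => 1 + l * t) l t := by
          simpa using ((hasDerivAt_id t).const_mul l).const_add 1
        exact ((h2.add h1).sub h3).differentiableAt.differentiableWithinAt
      · rw [interior_Ici]
        intro t ht
        have htpos := mem_Ioi.mp ht
        have h1t : (0:ℝ) < 1 + t := by linarith
        have h1 : HasDerivAt (fun t : ℝ => (1 + t) ^ l) (l * (1 + t) ^ (l - 1)) t := by
          have := (Real.hasDerivAt_rpow_const (x := 1 + t) (p := l)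
            (Or.inl h1t.ne')).comp t ((hasDerivAt_id t).const_add 1)
          simpa [Function.comp_def] using this
        have h2 : HasDerivAt (fun t : ℝ => l * (1 - l) / 2 * t ^ 2)
            (l * (1 - l) / 2 * (2 * t)) t := by
          simpa using (hasDerivAt_pow 2 t).const_mul (l * (1 - l) / 2)
        have h3 : HasDerivAt (fun t : ℝ => 1 + l * t) l t := by
          simpa using ((hasDerivAt_id t).const_mul l).const_add 1
        have hgd : HasDerivAt g (l * (1 - l) / 2 * (2 * t) + l * (1 + t) ^ (l - 1) - l) t :=
          (h2.add h1).sub h3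
        rw [hgd.deriv]
        have hkey := key_deriv_ineq hl0 hl1 htpos.le
        nlinarith [mul_le_mul_of_nonneg_left hkey hl0]
    have h0 : g 0 = 0 := by simp [hg]
    have := hmono (self_mem_Ici) (mem_Ici.mpr hx) hx
    rw [h0] at this
    simp only [hg] at this
    linarith
end

section
/- For all x ≥ 0 and all α, λ ∈ [0,1], setting β = √(1−α), one has λ(1−β)x + (1+βx)^λ − (1+x)^λ ≥ 0; equivalently, the ratio (1 + λx + (1+βx)^λ − (1+λβx))/(1+x)^λ is at least 1. -/
/-- For `x ≥ 0`, `α, λ ∈ [0,1]` and `β = √(1−α)`: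
`λ(1−β)x + (1+βx)^λ − (1+x)^λ ≥ 0`; equivalently
`(1 + λx + (1+βx)^λ − (1+λβx))/(1+x)^λ ≥ 1`. -/
theorem combined_rpow_ratio_ge_one (x : ℝ) (hx : 0 ≤ x) (α l : ℝ)
    (hα0 : 0 ≤ α) (hα1 : α ≤ 1) (hl0 : 0 ≤ l) (hl1 : l ≤ 1) :
    0 ≤ l * (1 - Real.sqrt (1 - α)) * x + (1 + Real.sqrt (1 - α) * x) ^ l - (1 + x) ^ l ∧
    1 ≤ (1 + l * x + (1 + Real.sqrt (1 - α) * x) ^ l - (1 + l * Real.sqrt (1 - α) * x)) /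
        (1 + x) ^ l := by
  set β := Real.sqrt (1 - α) with hβ
  have hβ0 : 0 ≤ β := Real.sqrt_nonneg _
  have hβ1 : β ≤ 1 := Real.sqrt_le_one.mpr (by linarith)
  have hs : (0:ℝ) < 1 + β * x := by positivity
  have hbound : 0 ≤ l * (1 - β) * x + (1 + β * x) ^ l - (1 + x) ^ l := by
    set u : ℝ := (1 - β) * x / (1 + β * x) with hu
    have hu0 : 0 ≤ u := div_nonneg (mul_nonneg (by linarith) hx) hs.le
    have hsplit : (1 + x) = (1 + β * x) * (1 + u) := by
      rw [hu]; field_simp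
      ring
    have hmul : (1 + x) ^ l = (1 + β * x) ^ l * (1 + u) ^ l := by
      rw [hsplit, Real.mul_rpow hs.le (by linarith)]
    have hbern : (1 + u) ^ l ≤ 1 + l * u :=
      rpow_one_add_le_one_add_mul_self (by linarith) hl0 hl1
    have hpowle : (1 + β * x) ^ l ≤ 1 + β * x := by
      nth_rewrite 2 [show (1 + β * x) = (1 + β * x) ^ (1:ℝ) by rw [Real.rpow_one]]
      exact Real.rpow_le_rpow_of_exponent_le (by nlinarith [mul_nonneg hβ0 hx]) hl1
    have hpos : 0 < (1 + β * x) ^ l := Real.rpow_pos_of_pos hs _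
    have : (1 + x) ^ l ≤ (1 + β * x) ^ l + l * ((1 - β) * x) := by
      calc (1 + x) ^ l = (1 + β * x) ^ l * (1 + u) ^ l := hmul
        _ ≤ (1 + β * x) ^ l * (1 + l * u) := by
            apply mul_le_mul_of_nonneg_left hbern hpos.le
        _ = (1 + β * x) ^ l + l * ((1 + β * x) ^ l * u) := by ring
        _ ≤ (1 + β * x) ^ l + l * ((1 + β * x) * u) := by
            have : (1 + β * x) ^ l * u ≤ (1 + β * x) * u :=
              mul_le_mul_of_nonneg_right hpowle hu0
            nlinarith
        _ = (1 + β * x) ^ l + l * ((1 - β) * x) := by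
            rw [hu]; field_simp
    linarith
  refine ⟨hbound, ?_⟩
  rw [le_div_iff₀ (Real.rpow_pos_of_pos (by linarith) l), one_mul]
  linarith
end

section
/- For all x ≥ 0 and all α, λ ∈ [0,1], setting β = √(1−α), it holds that log((λ(1−β)x + (1+βx)^λ)/(1+x)^λ) ≤ (1−β²)·(λ(1−λ)/2)·x² = α·(λ(1−λ)/2)·x². -/
open Real Set

set_option maxHeartbeats 1000000 in


/-- For `x ≥ 0`, `α, λ ∈ [0,1]` and `β = √(1−α)`:
`log((λ(1−β)x + (1+βx)^λ)/(1+x)^λ) ≤ α·(λ(1−λ)/2)·x²`. -/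
theorem log_combined_rpow_ratio_le (x : ℝ) (hx : 0 ≤ x) (α l : ℝ)
    (hα0 : 0 ≤ α) (hα1 : α ≤ 1) (hl0 : 0 ≤ l) (hl1 : l ≤ 1) :
    Real.log ((l * (1 - Real.sqrt (1 - α)) * x + (1 + Real.sqrt (1 - α) * x) ^ l) /
        (1 + x) ^ l)
      ≤ α * (l * (1 - l) / 2) * x ^ 2 := by
  set b := Real.sqrt (1 - α) with hbdef
  have hb0 : 0 ≤ b := Real.sqrt_nonneg _
  have hb2 : b ^ 2 = 1 - α := Real.sq_sqrt (by linarith)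
  have hb1 : b ≤ 1 := by nlinarith [sq_nonneg (b - 1)]
  set C : ℝ := l * (1 - l) / 2 * x ^ 2 with hC
  set N : ℝ → ℝ := fun t => l * (1 - t) * x + (1 + t * x) ^ l with hN
  set g : ℝ → ℝ := fun t => Real.log (N t) + t ^ 2 * C with hg
  have hN1 : ∀ t : ℝ, 0 ≤ t → t ≤ 1 → 1 ≤ N t := by
    intro t ht0 ht1
    have h1 : (1:ℝ) ≤ (1 + t * x) ^ l :=
      Real.one_le_rpow (by nlinarith) hl0
    have h2 : 0 ≤ l * (1 - t) * x := mul_nonneg (mul_nonneg hl0 (by linarith)) hx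
    simp only [hN]; nlinarith
  have hderiv : ∀ t : ℝ, 0 ≤ t → t ≤ 1 →
      HasDerivAt g (l * x * ((1 + t * x) ^ (l - 1) - 1) / N t + 2 * t * C) t := by
    intro t ht0 ht1
    have hbase : (0:ℝ) < 1 + t * x := by nlinarith
    have h1 : HasDerivAt (fun t : ℝ => 1 + t * x) x t := by
      simpa using ((hasDerivAt_id t).mul_const x).const_add 1
    have h2 : HasDerivAt (fun t : ℝ => (1 + t * x) ^ l)
        (l * (1 + t * x) ^ (l - 1) * x) t := by
      have := (Real.hasDerivAt_rpow_const (p := l) (Or.inl hbase.ne')).comp t h1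
      exact this
    have h4 : HasDerivAt (fun t : ℝ => l * (1 - t) * x) (l * -1 * x) t := by
      simpa using (((hasDerivAt_id t).const_sub 1).const_mul l).mul_const x
    have h3 : HasDerivAt N (l * -1 * x + l * (1 + t * x) ^ (l - 1) * x) t := h4.add h2
    have hNt : N t ≠ 0 := by have := hN1 t ht0 ht1; linarith
    have h5 : HasDerivAt (fun t => Real.log (N t))
        ((l * -1 * x + l * (1 + t * x) ^ (l - 1) * x) / N t) t := h3.log hNt
    have h6 : HasDerivAt (fun t : ℝ => t ^ 2 * C) (2 * t * C) t := by
      have := (hasDerivAt_pow 2 t).mul_const C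
      simpa using this
    have h7 := h5.add h6
    refine h7.congr_deriv ?_
    ring
  have hdnn : ∀ t : ℝ, 0 ≤ t → t ≤ 1 →
      0 ≤ l * x * ((1 + t * x) ^ (l - 1) - 1) / N t + 2 * t * C := by
    intro t ht0 ht1
    have hbase : (0:ℝ) < 1 + t * x := by nlinarith
    have hNt : 1 ≤ N t := hN1 t ht0 ht1
    have hbern : (1 + t * x) ^ (1 - l) ≤ 1 + (1 - l) * (t * x) :=
      rpow_one_add_le_one_add_mul_self (by nlinarith) (by linarith) (by linarith)
    have hP : (0:ℝ) < (1 + t * x) ^ (l - 1) := Real.rpow_pos_of_pos hbase _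
    have hmul : (1 + t * x) ^ (l - 1) * (1 + t * x) ^ (1 - l) = 1 := by
      rw [← Real.rpow_add hbase]; norm_num
    have hs0 : 0 ≤ (1 - l) * (t * x) := mul_nonneg (by linarith) (mul_nonneg ht0 hx)
    have hlow : 1 - (1 - l) * (t * x) ≤ (1 + t * x) ^ (l - 1) := by
      nlinarith [mul_le_mul_of_nonneg_left hbern hP.le]
    have hle1 : (1 + t * x) ^ (l - 1) ≤ 1 :=
      Real.rpow_le_one_of_one_le_of_nonpos (by nlinarith) (by linarith)
    have hnum : l * x * ((1 + t * x) ^ (l - 1) - 1) ≤ 0 := by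
      have : 0 ≤ l * x := mul_nonneg hl0 hx
      nlinarith
    have hterm : l * x * ((1 + t * x) ^ (l - 1) - 1)
        ≤ l * x * ((1 + t * x) ^ (l - 1) - 1) / N t := by
      rw [le_div_iff₀ (by linarith)]
      nlinarith
    have h8 : l * x * (1 - (1 + t * x) ^ (l - 1)) ≤ 2 * t * C := by
      have h9 : l * x * (1 - (1 + t * x) ^ (l - 1)) ≤ l * x * ((1 - l) * (t * x)) := by
        have hlx : 0 ≤ l * x := mul_nonneg hl0 hx
        nlinarith
      have h10 : 2 * t * C = l * x * ((1 - l) * (t * x)) := by rw [hC]; ring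
      linarith
    nlinarith
  have hmono : MonotoneOn g (Icc b 1) := by
    apply monotoneOn_of_hasDerivWithinAt_nonneg (convex_Icc b 1)
      (f' := fun t => l * x * ((1 + t * x) ^ (l - 1) - 1) / N t + 2 * t * C)
    · intro t ht
      exact (hderiv t (le_trans hb0 ht.1) ht.2).continuousAt.continuousWithinAt
    · intro t ht
      rw [interior_Icc] at ht
      exact (hderiv t (le_trans hb0 ht.1.le) ht.2.le).hasDerivWithinAt
    · intro t ht
      rw [interior_Icc] at ht
      exact hdnn t (le_trans hb0 ht.1.le) ht.2.le
  have key : g b ≤ g 1 := hmono (left_mem_Icc.2 hb1) (right_mem_Icc.2 hb1) hb1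
  have hNb : (1:ℝ) ≤ N b := hN1 b hb0 hb1
  have hxpos : (0:ℝ) < (1 + x) ^ l := Real.rpow_pos_of_pos (by linarith) _
  have hN1eq : N 1 = (1 + x) ^ l := by simp [hN]
  have hlogdiv : Real.log (N b / (1 + x) ^ l) = Real.log (N b) - Real.log ((1 + x) ^ l) :=
    Real.log_div (one_pos.trans_le hNb).ne' hxpos.ne'
  have hgoal : Real.log (N b) - Real.log ((1 + x) ^ l) ≤ (1 - b ^ 2) * C := by
    have hb' : g b = Real.log (N b) + b ^ 2 * C := rfl
    have h1 : g 1 = Real.log ((1 + x) ^ l) + C := by simp [hg, hN1eq]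
    rw [hb', h1] at key
    linarith
  show Real.log (N b / (1 + x) ^ l) ≤ α * (l * (1 - l) / 2) * x ^ 2
  rw [hlogdiv]
  have heq : α * (l * (1 - l) / 2) * x ^ 2 = (1 - b ^ 2) * C := by
    have hba : 1 - b ^ 2 = α := by linarith
    rw [hC, hba]; ring
  rw [heq]
  exact hgoal
end

section
/- For all β, λ ∈ [0,1] and x ≥ 0, it holds that 1 ≤ β(1−λ)x(1+βx)^λ + (1+βx)^{λ−1}. -/
/-- For `β, λ ∈ [0,1]` and `x ≥ 0`: `1 ≤ β(1−λ)x(1+βx)^λ + (1+βx)^(λ−1)`. -/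
theorem one_le_aux_combination (β l x : ℝ) (hβ0 : 0 ≤ β) (hβ1 : β ≤ 1)
    (hl0 : 0 ≤ l) (hl1 : l ≤ 1) (hx : 0 ≤ x) :
    1 ≤ β * (1 - l) * x * (1 + β * x) ^ l + (1 + β * x) ^ (l - 1) := by
  set s : ℝ := β * x with hs
  have hs0 : 0 ≤ s := mul_nonneg hβ0 hx
  have ht : (0:ℝ) < 1 + s := by linarith
  -- Bernoulli: (1+s)^(1-l) ≤ 1 + (1-l)*s ≤ 1 + (1-l)*s*(1+s)
  have hb : (1 + s) ^ (1 - l) ≤ 1 + (1 - l) * s :=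
    rpow_one_add_le_one_add_mul_self (by linarith) (by linarith) (by linarith)
  have key : (1 + s) ^ (1 - l) ≤ 1 + (1 - l) * s * (1 + s) := by
    nlinarith [mul_nonneg (mul_nonneg (by linarith : (0:ℝ) ≤ 1 - l) hs0) hs0]
  -- multiply through by (1+s)^(l-1)
  have hpow : (1 + s) ^ (l - 1) * (1 + s) ^ (1 - l) = 1 := by
    rw [← Real.rpow_add ht]; norm_num
  have hpos : (0:ℝ) < (1 + s) ^ (l - 1) := Real.rpow_pos_of_pos ht _
  have h1 : 1 ≤ (1 + s) ^ (l - 1) * (1 + (1 - l) * s * (1 + s)) := by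
    calc 1 = (1 + s) ^ (l - 1) * (1 + s) ^ (1 - l) := hpow.symm
    _ ≤ _ := by exact mul_le_mul_of_nonneg_left key hpos.le
  have hmul : (1 + s) ^ (l - 1) * (1 + s) = (1 + s) ^ l := by
    rw [← Real.rpow_add_one ht.ne' (l-1)]; ring_nf
  calc 1 ≤ (1 + s) ^ (l - 1) * (1 + (1 - l) * s * (1 + s)) := h1
  _ = (1 - l) * s * ((1 + s) ^ (l - 1) * (1 + s)) + (1 + s) ^ (l - 1) := by ring
  _ = β * (1 - l) * x * (1 + β * x) ^ l + (1 + β * x) ^ (l - 1) := by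
      rw [hmul]; ring
end

section
/- For fixed α, λ ∈ [0,1] with β = √(1−α), the limit as x → 0⁺ of (1/x²)·log((λ(1−β)x + (1+βx)^λ)/(1+x)^λ) equals α·λ(1−λ)/2. -/
open Filter Topology Set

/-- For fixed `α, λ ∈ [0,1]` and `β = √(1−α)`, the limit as `x → 0⁺` of
`(1/x²)·log((λ(1−β)x + (1+βx)^λ)/(1+x)^λ)` is `α·λ(1−λ)/2`. -/
theorem tendsto_log_combined_ratio_div_sq (α l : ℝ)
    (hα0 : 0 ≤ α) (hα1 : α ≤ 1) (hl0 : 0 ≤ l) (hl1 : l ≤ 1) :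
    Tendsto (fun x : ℝ =>
        (1 / x ^ 2) * Real.log ((l * (1 - Real.sqrt (1 - α)) * x +
          (1 + Real.sqrt (1 - α) * x) ^ l) / (1 + x) ^ l))
      (𝓝[>] 0) (𝓝 (α * (l * (1 - l)) / 2)) := by
  set β := Real.sqrt (1 - α) with hβdef
  have hβ0 : 0 ≤ β := Real.sqrt_nonneg _
  have hβ1 : β ≤ 1 := Real.sqrt_le_one.mpr (by linarith)
  have hβsq : β ^ 2 = 1 - α := Real.sq_sqrt (by linarith)
  set N : ℝ → ℝ := fun x => l * (1 - β) * x + (1 + β * x) ^ l with hNdef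
  set N' : ℝ → ℝ := fun x => l * (1 - β) + β * l * (1 + β * x) ^ (l - 1) with hN'def
  have hbase : ∀ x : ℝ, 0 ≤ x → (0:ℝ) < 1 + β * x := by
    intro x hx; nlinarith
  have hNpos : ∀ x : ℝ, 0 ≤ x → 0 < N x := by
    intro x hx
    have h1 : (0:ℝ) < (1 + β * x) ^ l := Real.rpow_pos_of_pos (hbase x hx) l
    have h2 : 0 ≤ l * (1 - β) * x := mul_nonneg (mul_nonneg hl0 (by linarith)) hx
    simp only [hNdef]; linarith
  have hN0 : N 0 = 1 := by simp [hNdef, Real.one_rpow]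
  have hN'0 : N' 0 = l := by simp [hN'def, Real.one_rpow]; ring
  -- derivative of N
  have hNderiv : ∀ x : ℝ, 0 ≤ x → HasDerivAt N (N' x) x := by
    intro x hx
    have h1 : HasDerivAt (fun y : ℝ => 1 + β * y) β x := by
      simpa using ((hasDerivAt_id x).const_mul β).const_add 1
    have h2 : HasDerivAt (fun y : ℝ => (1 + β * y) ^ l)
        (β * l * (1 + β * x) ^ (l - 1)) x :=
      h1.rpow_const (Or.inl (ne_of_gt (hbase x hx)))
    have h3 : HasDerivAt (fun y : ℝ => l * (1 - β) * y) (l * (1 - β)) x := by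
      simpa using (hasDerivAt_id x).const_mul (l * (1 - β))
    exact h3.add h2
  -- derivative of N' at 0
  have hN'deriv : HasDerivAt N' (β * l * (β * (l - 1) * (1:ℝ) ^ (l - 1 - 1))) 0 := by
    have h1 : HasDerivAt (fun y : ℝ => 1 + β * y) β 0 := by
      simpa using ((hasDerivAt_id (0:ℝ)).const_mul β).const_add 1
    have h2 : HasDerivAt (fun y : ℝ => (1 + β * y) ^ (l - 1))
        (β * (l - 1) * (1 + β * 0) ^ (l - 1 - 1)) 0 :=
      h1.rpow_const (Or.inl (ne_of_gt (hbase 0 le_rfl)))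
    have h3 := (h2.const_mul (β * l)).const_add (l * (1 - β))
    simpa [hN'def, mul_comm, mul_assoc, mul_left_comm] using h3
  -- G and its derivative at 0
  set G : ℝ → ℝ := fun x => N' x * (1 + x) - l * N x with hGdef
  have hG0 : G 0 = 0 := by simp [hGdef, hN'0, hN0]
  set c : ℝ := β * l * (β * (l - 1)) + l - l * l with hcdef
  have hGderiv : HasDerivAt G c 0 := by
    have h1 : HasDerivAt (fun y : ℝ => 1 + y) 1 0 := by
      simpa using (hasDerivAt_id (0:ℝ)).const_add 1
    have h2 := (hN'deriv.mul h1).sub ((hNderiv 0 le_rfl).const_mul l)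
    have heq : c = β * l * (β * (l - 1) * (1:ℝ) ^ (l - 1 - 1)) * (1 + 0) + N' 0 * 1 - l * N' 0 := by
      rw [Real.one_rpow, hN'0]; simp only [hcdef]; ring
    rw [hGdef, heq]; exact h2
  have hc : c * (1 / 2) = α * (l * (1 - l)) / 2 := by
    have hb : β * β = 1 - α := by nlinarith [hβsq]
    simp only [hcdef]
    nlinarith [hb]
  -- F and its derivative
  set F : ℝ → ℝ := fun x => Real.log (N x) - l * Real.log (1 + x) with hFdef
  set F' : ℝ → ℝ := fun x => N' x / N x - l * (1 / (1 + x)) with hF'def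
  have hFderiv : ∀ x ∈ Ioo (0:ℝ) 1, HasDerivAt F (F' x) x := by
    intro x hx
    have hx0 : (0:ℝ) ≤ x := le_of_lt hx.1
    have h1 : HasDerivAt (fun y => Real.log (N y)) (N' x / N x) x :=
      (hNderiv x hx0).log (ne_of_gt (hNpos x hx0))
    have h2 : HasDerivAt (fun y : ℝ => 1 + y) 1 x := by
      simpa using (hasDerivAt_id x).const_add 1
    have h3 : HasDerivAt (fun y : ℝ => Real.log (1 + y)) (1 / (1 + x)) x := by
      simpa using h2.log (by positivity : (1:ℝ) + x ≠ 0)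
    exact h1.sub (h3.const_mul l)
  -- F tends to 0 at 0+
  have hFcont : Tendsto F (𝓝[>] (0:ℝ)) (𝓝 0) := by
    have h1 : ContinuousAt N 0 := (hNderiv 0 le_rfl).continuousAt
    have h2 : ContinuousAt (fun y => Real.log (N y)) 0 :=
      (Real.continuousAt_log (by rw [hN0]; norm_num)).comp h1
    have h3 : ContinuousAt (fun y : ℝ => Real.log (1 + y)) 0 :=
      (Real.continuousAt_log (by norm_num)).comp (by fun_prop)
    have h4 : ContinuousAt F 0 := h2.sub (h3.const_mul l)
    have hF0 : F 0 = 0 := by simp [hFdef, hN0]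
    simpa [hF0] using h4.tendsto.mono_left nhdsWithin_le_nhds
  -- G x / x tends to c
  have hslope : Tendsto (fun x : ℝ => G x / x) (𝓝[>] (0:ℝ)) (𝓝 c) := by
    have h1 := hasDerivAt_iff_tendsto_slope.mp hGderiv
    have h2 : Tendsto (slope G 0) (𝓝[>] (0:ℝ)) (𝓝 c) :=
      h1.mono_left (nhdsWithin_mono 0 (fun x hx => ne_of_gt hx))
    refine h2.congr' ?_
    filter_upwards [self_mem_nhdsWithin] with x hx
    simp [slope, hG0, div_eq_inv_mul]
  -- the inverse factor tends to 1/2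
  have hinv : Tendsto (fun x : ℝ => 1 / (2 * (N x * (1 + x)))) (𝓝[>] (0:ℝ)) (𝓝 (1/2)) := by
    have h1 : ContinuousAt (fun x : ℝ => 2 * (N x * (1 + x))) 0 := by
      exact continuousAt_const.mul ((hNderiv 0 le_rfl).continuousAt.mul (by fun_prop))
    have h2 : ContinuousAt (fun x : ℝ => 1 / (2 * (N x * (1 + x)))) 0 := by
      apply ContinuousAt.div continuousAt_const h1
      rw [hN0]; norm_num
    have h3 := h2.tendsto.mono_left (nhdsWithin_le_nhds : 𝓝[Set.Ioi (0:ℝ)] 0 ≤ 𝓝 0)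
    simpa [hN0] using h3
  -- F'/(2x) tends to the target
  have hdiv : Tendsto (fun x => F' x / (2 * x)) (𝓝[>] (0:ℝ)) (𝓝 (α * (l * (1 - l)) / 2)) := by
    have hprod := hslope.mul hinv
    rw [hc] at hprod
    refine hprod.congr' ?_
    filter_upwards [self_mem_nhdsWithin] with x hx
    have hx0 : (0:ℝ) < x := hx
    have hN : N x ≠ 0 := ne_of_gt (hNpos x hx0.le)
    have h1x : (1:ℝ) + x ≠ 0 := by positivity
    simp only [hF'def, hGdef]
    field_simp
  -- L'Hopital
  have hmain : Tendsto (fun x => F x / x ^ 2) (𝓝[>] (0:ℝ)) (𝓝 (α * (l * (1 - l)) / 2)) := by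
    refine HasDerivAt.lhopital_zero_right_on_Ioo (f' := F') (g' := fun x => 2 * x)
      (by norm_num : (0:ℝ) < 1) hFderiv ?_ ?_ hFcont ?_ hdiv
    · intro x hx
      simpa [two_mul] using hasDerivAt_pow 2 x
    · intro x hx
      have : (0:ℝ) < x := hx.1
      positivity
    · have : Tendsto (fun x : ℝ => x ^ 2) (𝓝 0) (𝓝 ((0:ℝ) ^ 2)) := ((continuous_pow 2).tendsto 0)
      simpa using this.mono_left (nhdsWithin_le_nhds : 𝓝[Set.Ioi (0:ℝ)] 0 ≤ 𝓝 0)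
  -- conclude
  refine hmain.congr' ?_
  filter_upwards [self_mem_nhdsWithin] with x hx
  have hx0 : (0:ℝ) < x := hx
  have hN : (0:ℝ) < N x := hNpos x hx0.le
  have h1x : (0:ℝ) < 1 + x := by positivity
  have hrp : (0:ℝ) < (1 + x) ^ l := Real.rpow_pos_of_pos h1x l
  have hlog : Real.log (N x / (1 + x) ^ l) = F x := by
    rw [Real.log_div (ne_of_gt hN) (ne_of_gt hrp), Real.log_rpow h1x]
  show F x / x ^ 2 = 1 / x ^ 2 * Real.log (N x / (1 + x) ^ l)
  rw [hlog]; ring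
end

section
/- Let N be a standard Poisson process, b > 0, and T_b = inf{t ≥ 0 : N_t − (1+b)t = −1}. Then T_b is almost surely finite, N_{T_b} − (1+b)T_b = −1, and for every λ > 0, E[exp(−T_b·f_b(λ))] ≤ exp(−λ), where f_b(λ) = exp(−λ) + λ(1+b) − 1. -/
open MeasureTheory Filter Topology ProbabilityTheory
open scoped NNReal ENNReal

section PoissonHitAux

lemma nat_eq_of_abs_lt {m n : ℕ} (h : |(m:ℝ) - n| < 1) : m = n := by
  rw [abs_lt] at h
  obtain ⟨h1, h2⟩ := h
  have hmn : (m:ℝ) < n + 1 := by linarith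
  have hnm : (n:ℝ) < m + 1 := by linarith
  have h3 : m < n + 1 := by exact_mod_cast hmn
  have h4 : n < m + 1 := by exact_mod_cast hnm
  omega

lemma step_const {f : ℝ≥0 → ℕ}
    (hrc : ∀ t : ℝ≥0, ContinuousWithinAt (fun s => (f s : ℝ)) (Set.Ici t) t) (T : ℝ≥0) :
    ∃ ε : ℝ≥0, 0 < ε ∧ ∀ s : ℝ≥0, T ≤ s → s < T + ε → f s = f T := by
  have h2 : (fun s => ((f s : ℝ))) ⁻¹' Metric.ball ((f T : ℝ)) 1 ∈ 𝓝[Set.Ici T] T :=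
    (hrc T) (Metric.ball_mem_nhds ((f T : ℝ)) one_pos)
  rw [Metric.mem_nhdsWithin_iff] at h2
  obtain ⟨ε, hε, hsub⟩ := h2
  refine ⟨ε.toNNReal, by simpa using hε, fun s hTs hs => ?_⟩
  have hdist : dist s T < ε := by
    rw [NNReal.dist_eq, abs_of_nonneg (sub_nonneg.2 (by exact_mod_cast hTs))]
    have : (s:ℝ) < (T:ℝ) + ε.toNNReal := by exact_mod_cast hs
    have hc : (ε.toNNReal : ℝ) = ε := Real.coe_toNNReal _ hε.le
    linarith
  have hmem : s ∈ Metric.ball T ε ∩ Set.Ici T := ⟨hdist, hTs⟩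
  have := hsub hmem
  rw [Set.mem_preimage, Metric.mem_ball, Real.dist_eq] at this
  exact nat_eq_of_abs_lt this

lemma path_hit {f : ℝ≥0 → ℕ} {c : ℝ} (hc : 1 < c) (hf0 : f 0 = 0)
    (hmono : Monotone f)
    (hrc : ∀ t : ℝ≥0, ContinuousWithinAt (fun s => (f s : ℝ)) (Set.Ici t) t)
    (hex : ∃ u : ℝ≥0, (f u : ℝ) - c * u ≤ -1) :
    ∃ T : ℝ≥0, ((f T : ℝ) - c * T = -1) ∧ (∀ t : ℝ≥0, (f t : ℝ) - c * t ≤ -1 → T ≤ t) ∧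
      ∃ ε : ℝ≥0, 0 < ε ∧ ∀ s : ℝ≥0, T < s → s < T + ε → (f s : ℝ) - c * s < -1 := by
  have hc0 : (0:ℝ) < c := by linarith
  set S : Set ℝ≥0 := {t | (f t : ℝ) - c * t ≤ -1} with hS
  have hne : S.Nonempty := hex
  set T := sInf S with hT
  have hTle : ∀ t ∈ S, T ≤ t := fun t ht => csInf_le (OrderBot.bddBelow S) ht
  obtain ⟨ε, hε, hconst⟩ := step_const hrc T
  -- claim 1 : f T ≤ c T - 1
  have claim1 : (f T : ℝ) ≤ c * T - 1 := by
    have : ∀ η : ℝ, 0 < η → (f T : ℝ) ≤ c * T - 1 + η := by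
      intro η hη
      set δ : ℝ≥0 := min ε (Real.toNNReal (η / c)) with hδ
      have hδpos : 0 < δ := lt_min hε (by simp [Real.toNNReal_pos]; positivity)
      obtain ⟨s, hsS, hs⟩ := exists_lt_of_csInf_lt hne (lt_add_of_pos_right T hδpos)
      have hTs : T ≤ s := hTle s hsS
      have hfs : f s = f T :=
        hconst s hTs (lt_of_lt_of_le hs (add_le_add_right (min_le_left _ _) T))
      have hsS' : (f s : ℝ) - c * s ≤ -1 := hsS
      have hsr : (s : ℝ) < (T : ℝ) + δ := by exact_mod_cast hs
      have hδη : (δ : ℝ) ≤ η / c := by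
        have := min_le_right ε (Real.toNNReal (η / c))
        have h2 : ((Real.toNNReal (η / c)) : ℝ) = η / c :=
          Real.coe_toNNReal _ (by positivity)
        calc (δ:ℝ) ≤ (Real.toNNReal (η / c) : ℝ) := by exact_mod_cast this
          _ = η / c := h2
      have : c * (δ:ℝ) ≤ η := by
        rw [← le_div_iff₀' hc0]; exact hδη
      rw [hfs] at hsS'
      nlinarith
    by_contra hcon
    push_neg at hcon
    have := this (((f T:ℝ) - (c * T - 1)) / 2) (by linarith)
    linarith
  have hT0 : 0 < T := by
    rcases eq_or_lt_of_le (zero_le : (0:ℝ≥0) ≤ T) with h | h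
    · exfalso
      rw [← h] at claim1
      simp [hf0] at claim1
      linarith
    · exact h
  -- claim 2 : c T - 1 ≤ f T
  have claim2 : c * T - 1 ≤ (f T : ℝ) := by
    have : ∀ η : ℝ, 0 < η → c * T - 1 ≤ (f T : ℝ) + η := by
      intro η hη
      set ν : ℝ≥0 := Real.toNNReal (η / c) with hν
      have hν0 : 0 < ν := by simp [hν, Real.toNNReal_pos]; positivity
      have hνη : c * (ν:ℝ) ≤ η := by
        rw [← le_div_iff₀' hc0]
        exact le_of_eq (Real.coe_toNNReal _ (by positivity))
      rcases le_or_gt T ν with hcase | hcase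
      · have : c * (T:ℝ) ≤ η := le_trans (by
          have : (T:ℝ) ≤ ν := by exact_mod_cast hcase
          nlinarith) hνη
        have hfT0 : (0:ℝ) ≤ (f T : ℝ) := by positivity
        linarith
      · set t := T - ν with ht
        have htT : t < T := tsub_lt_self hT0 hν0
        have htS : t ∉ S := fun hmem => absurd (hTle t hmem) (not_le.2 htT)
        have hft : (f t : ℝ) - c * t > -1 := by
          by_contra hcon; push_neg at hcon; exact htS hcon
        have hmt : (f t : ℝ) ≤ f T := by exact_mod_cast hmono htT.le
        have htr : (t : ℝ) = (T:ℝ) - ν := by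
          rw [ht, NNReal.coe_sub hcase.le]
        rw [htr] at hft
        nlinarith
    by_contra hcon
    push_neg at hcon
    have := this ((c * T - 1 - (f T:ℝ)) / 2) (by linarith)
    linarith
  have hfT : (f T : ℝ) - c * T = -1 := by linarith
  refine ⟨T, hfT, fun t ht => hTle t ht, ε, hε, fun s hTs hs => ?_⟩
  have hfs : f s = f T := hconst s hTs.le hs
  rw [hfs]
  have : (T:ℝ) < s := by exact_mod_cast hTs
  nlinarith

lemma poisson_hasSum_exp (r : ℝ≥0) (a : ℝ) :
    HasSum (fun n : ℕ => poissonPMFReal r n * Real.exp (a * n))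
      (Real.exp (r * (Real.exp a - 1))) := by
  have h : HasSum (fun n : ℕ => ((r : ℝ) * Real.exp a) ^ n / n.factorial)
      (Real.exp ((r : ℝ) * Real.exp a)) := by
    rw [Real.exp_eq_exp_ℝ]
    exact NormedSpace.expSeries_div_hasSum_exp _
  have h2 := h.mul_left (Real.exp (-(r : ℝ)))
  have heq : (fun n : ℕ => Real.exp (-(r:ℝ)) * (((r:ℝ) * Real.exp a) ^ n / n.factorial))
      = fun n : ℕ => poissonPMFReal r n * Real.exp (a * n) := by
    funext n
    rw [poissonPMFReal, mul_pow]
    rw [mul_comm a (n:ℝ), Real.exp_nat_mul]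
    ring
  rw [heq] at h2
  have he : Real.exp (r * (Real.exp a - 1)) = Real.exp (-(r:ℝ)) * Real.exp (r * Real.exp a) := by
    rw [mul_sub, mul_one, sub_eq_add_neg, add_comm, Real.exp_add]
  rw [he]; exact h2

lemma poisson_lintegral_exp (r : ℝ≥0) (a : ℝ) :
    ∫⁻ n : ℕ, ENNReal.ofReal (Real.exp (a * n)) ∂(poissonMeasure r)
      = ENNReal.ofReal (Real.exp (r * (Real.exp a - 1))) := by
  rw [lintegral_countable']
  have : ∀ n : ℕ, (poissonMeasure r) {n} = ENNReal.ofReal (poissonPMFReal r n) := by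
    intro n
    rw [poissonMeasure_singleton]
    rfl
  simp_rw [this]
  rw [← (poisson_hasSum_exp r a).tsum_eq]
  rw [ENNReal.ofReal_tsum_of_nonneg (fun n => mul_nonneg poissonPMFReal_nonneg (Real.exp_pos _).le) (poisson_hasSum_exp r a).summable]
  congr 1 with n
  rw [← ENNReal.ofReal_mul (by positivity : (0:ℝ) ≤ Real.exp (a * n)), mul_comm]

lemma poisson_integrable_exp (r : ℝ≥0) (a : ℝ) :
    Integrable (fun n : ℕ => Real.exp (a * n)) (poissonMeasure r) := by
  constructor
  · exact (measurable_from_top (f := fun n : ℕ => Real.exp (a * n))).aestronglyMeasurable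
  · rw [HasFiniteIntegral]
    have : ∀ n : ℕ, ‖Real.exp (a * n)‖ₑ = ENNReal.ofReal (Real.exp (a * n)) := by
      intro n
      rw [← ofReal_norm_eq_enorm, Real.norm_eq_abs, abs_of_pos (Real.exp_pos _)]
    simp_rw [this]
    rw [poisson_lintegral_exp]
    exact ENNReal.ofReal_lt_top

lemma poisson_integral_exp (r : ℝ≥0) (a : ℝ) :
    ∫ n : ℕ, Real.exp (a * n) ∂(poissonMeasure r)
      = Real.exp (r * (Real.exp a - 1)) := by
  rw [integral_poissonMeasure]
  rw [← (poisson_hasSum_exp r a).tsum_eq]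
  congr 1 with n

lemma poisson_tail (r : ℝ≥0) (A θ : ℝ) (hθ : 0 < θ) :
    (poissonMeasure r) {x : ℕ | A ≤ (x:ℝ)}
      ≤ ENNReal.ofReal (Real.exp (r * (Real.exp θ - 1) - θ * A)) := by
  have hms : MeasurableSet {x : ℕ | A ≤ (x:ℝ)} := MeasurableSet.of_discrete
  have h1 : (poissonMeasure r) {x : ℕ | A ≤ (x:ℝ)}
      ≤ ∫⁻ x : ℕ, ENNReal.ofReal (Real.exp (-(θ*A))) * ENNReal.ofReal (Real.exp (θ * x))
          ∂(poissonMeasure r) := by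
    rw [← lintegral_indicator_one hms]
    apply lintegral_mono
    intro x
    simp only []
    rw [← ENNReal.ofReal_mul (Real.exp_pos _).le, ← Real.exp_add]
    by_cases hx : A ≤ (x:ℝ)
    · rw [Set.indicator_of_mem (show x ∈ {x:ℕ | A ≤ (x:ℝ)} from hx)]
      simp only [Pi.one_apply]
      rw [show (1:ℝ≥0∞) = ENNReal.ofReal 1 by simp]
      apply ENNReal.ofReal_le_ofReal
      rw [← Real.exp_zero]
      apply Real.exp_le_exp.2
      nlinarith
    · rw [Set.indicator_of_notMem (show x ∉ {x:ℕ | A ≤ (x:ℝ)} from hx)]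
      exact zero_le
  rw [lintegral_const_mul _ (measurable_from_top.ennreal_ofReal), poisson_lintegral_exp,
    ← ENNReal.ofReal_mul (Real.exp_pos _).le, ← Real.exp_add] at h1
  convert h1 using 3
  ring

lemma hitting_meas {Ω : Type*} {m0 : MeasurableSpace Ω} {u : ℕ → Ω → ℝ}
    (hu : ∀ j, Measurable (u j)) {s : Set ℝ} (hs : MeasurableSet s) (K : ℕ) :
    Measurable (MeasureTheory.hittingBtwn u s 0 K) := by
  set F : Filtration ℕ m0 := ⟨fun _ => m0, monotone_const, fun _ => le_rfl⟩ with hF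
  have hadp : Adapted F u := fun j => hu j
  have hst : IsStoppingTime F (fun ω => ((MeasureTheory.hittingBtwn u s 0 K ω : ℕ) : WithTop ℕ)) :=
    hadp.isStoppingTime_hittingBtwn hs
  apply measurable_to_countable'
  intro n
  have h := hst.measurableSet_eq n
  convert h using 1
  ext ω; simp [Set.mem_preimage]

lemma ae_hits {Ω : Type*} {m0 : MeasurableSpace Ω} (μ : Measure Ω) [IsProbabilityMeasure μ]
    (N : ℝ≥0 → Ω → ℕ) (b : ℝ) (hb : 0 < b)
    (hmeas : ∀ t : ℝ≥0, Measurable (N t))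
    (hN0 : ∀ ω, N 0 ω = 0)
    (hlaw : ∀ s t : ℝ≥0, s ≤ t →
      μ.map (fun ω => N t ω - N s ω) = ProbabilityTheory.poissonMeasure (t - s)) :
    ∀ᵐ ω ∂μ, ∃ u : ℝ≥0, (N u ω : ℝ) - (1+b) * u ≤ -1 := by
  rw [ae_iff]
  set θ : ℝ := min b 1 / 2 with hθdef
  have hθpos : 0 < θ := by
    simp only [hθdef]
    have : 0 < min b 1 := lt_min hb one_pos
    linarith
  have hθle1 : θ ≤ 1 := by
    simp only [hθdef]
    have : min b 1 ≤ 1 := min_le_right _ _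
    linarith
  have hθb : θ ≤ b / 2 := by
    simp only [hθdef]
    have : min b 1 ≤ b := min_le_left _ _
    linarith
  -- quadratic bound on exp
  have hexpq : Real.exp θ - 1 ≤ θ + θ^2 := by
    have hB := Real.exp_bound (x := θ) (by rw [abs_of_pos hθpos]; exact hθle1) (n := 2) (by norm_num)
    have hsum : ∑ i ∈ Finset.range 2, θ ^ i / (Nat.factorial i) = 1 + θ := by
      simp [Finset.sum_range_succ]
    rw [hsum, abs_of_pos hθpos] at hB
    have h2 := (abs_le.1 hB).2
    norm_num [Nat.factorial] at h2
    nlinarith [sq_nonneg θ]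
  -- map of N n
  have hmapn : ∀ n : ℕ, μ.map (N (n:ℝ≥0)) = poissonMeasure (n:ℝ≥0) := by
    intro n
    have h := hlaw 0 (n:ℝ≥0) zero_le
    have heq : (fun ω => N (n:ℝ≥0) ω - N 0 ω) = N (n:ℝ≥0) := by
      funext ω; rw [hN0 ω]; omega
    rw [heq, tsub_zero] at h
    exact h
  -- per-n bound
  have hbound : ∀ n : ℕ,
      μ {ω | ¬ ∃ u : ℝ≥0, (N u ω : ℝ) - (1+b) * u ≤ -1}
        ≤ ENNReal.ofReal (Real.exp (θ - n * (θ * b / 2))) := by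
    intro n
    have hsub : {ω | ¬ ∃ u : ℝ≥0, (N u ω : ℝ) - (1+b) * u ≤ -1}
        ⊆ {ω | (1+b) * (n:ℝ) - 1 ≤ (N (n:ℝ≥0) ω : ℝ)} := by
      intro ω hω
      simp only [Set.mem_setOf_eq, not_exists, not_le] at hω
      have := hω (n:ℝ≥0)
      have hc : (((n:ℝ≥0)):ℝ) = (n:ℝ) := by push_cast; rfl
      rw [hc] at this
      simp only [Set.mem_setOf_eq]
      linarith
    have hA : {ω | (1+b) * (n:ℝ) - 1 ≤ (N (n:ℝ≥0) ω : ℝ)}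
        = (N (n:ℝ≥0)) ⁻¹' {x : ℕ | (1+b) * (n:ℝ) - 1 ≤ (x:ℝ)} := rfl
    have h1 : μ {ω | (1+b) * (n:ℝ) - 1 ≤ (N (n:ℝ≥0) ω : ℝ)}
        = (poissonMeasure (n:ℝ≥0)) {x : ℕ | (1+b) * (n:ℝ) - 1 ≤ (x:ℝ)} := by
      rw [hA, ← hmapn n, Measure.map_apply (hmeas _) MeasurableSet.of_discrete]
    have h2 := poisson_tail (n:ℝ≥0) ((1+b) * (n:ℝ) - 1) θ hθpos
    have h3 : ((n:ℝ≥0) : ℝ) * (Real.exp θ - 1) - θ * ((1+b) * (n:ℝ) - 1)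
        ≤ θ - n * (θ * b / 2) := by
      have hc : (((n:ℝ≥0)):ℝ) = (n:ℝ) := by push_cast; rfl
      rw [hc]
      have hn0 : (0:ℝ) ≤ (n:ℝ) := Nat.cast_nonneg n
      have key : Real.exp θ - 1 - θ * (1+b) ≤ -(θ * b / 2) := by nlinarith
      nlinarith
    calc μ {ω | ¬ ∃ u : ℝ≥0, (N u ω : ℝ) - (1+b) * u ≤ -1}
        ≤ μ {ω | (1+b) * (n:ℝ) - 1 ≤ (N (n:ℝ≥0) ω : ℝ)} := measure_mono hsub
      _ = (poissonMeasure (n:ℝ≥0)) {x : ℕ | (1+b) * (n:ℝ) - 1 ≤ (x:ℝ)} := h1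
      _ ≤ ENNReal.ofReal (Real.exp (((n:ℝ≥0):ℝ) * (Real.exp θ - 1) - θ * ((1+b) * (n:ℝ) - 1))) := h2
      _ ≤ ENNReal.ofReal (Real.exp (θ - n * (θ * b / 2))) :=
          ENNReal.ofReal_le_ofReal (Real.exp_le_exp.2 h3)
  -- limit
  have htend : Tendsto (fun n : ℕ => ENNReal.ofReal (Real.exp (θ - n * (θ * b / 2)))) atTop (𝓝 0) := by
    have h2 : Tendsto (fun n : ℕ => ((n:ℝ) * (θ * b / 2))) atTop atTop :=
      Tendsto.atTop_mul_const (by nlinarith) tendsto_natCast_atTop_atTop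
    have h1 : Tendsto (fun n : ℕ => θ - n * (θ * b / 2)) atTop atBot := by
      apply tendsto_atBot_add_const_left
      exact tendsto_neg_atTop_atBot.comp h2
    have h3 : Tendsto (fun n : ℕ => Real.exp (θ - n * (θ * b / 2))) atTop (𝓝 0) :=
      Real.tendsto_exp_atBot.comp h1
    have h4 := ENNReal.tendsto_ofReal h3
    simpa using h4
  have hle := le_of_tendsto_of_tendsto' (tendsto_const_nhds
      (x := μ {ω | ¬ ∃ u : ℝ≥0, (N u ω : ℝ) - (1+b) * u ≤ -1}) (f := atTop)) htend hbound
  simpa using hle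

lemma grid_bound {Ω : Type*} {m0 : MeasurableSpace Ω} (μ : Measure Ω) [IsProbabilityMeasure μ]
    (N : ℝ≥0 → Ω → ℕ) (b : ℝ) (hb : 0 < b)
    (hmeas : ∀ t : ℝ≥0, Measurable (N t))
    (hN0 : ∀ ω, N 0 ω = 0) (hmono : ∀ ω, Monotone fun t => N t ω)
    (hlaw : ∀ s t : ℝ≥0, s ≤ t →
      μ.map (fun ω => N t ω - N s ω) = ProbabilityTheory.poissonMeasure (t - s))
    (hindep : ∀ (n : ℕ) (t : ℕ → ℝ≥0), Monotone t →
      ProbabilityTheory.iIndepFun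
        (fun (i : Fin n) ω => N (t (i.1 + 1)) ω - N (t i.1) ω) μ)
    (l : ℝ) (hl : 0 < l) (δ : ℝ≥0) (K : ℕ) :
    ∫⁻ ω, Set.indicator
        {ω | ∃ j, j ≤ K ∧ (N ((j:ℝ≥0)*δ) ω : ℝ) - (1+b) * ((j:ℝ≥0)*δ) ≤ -1}
        (fun ω => ENNReal.ofReal (Real.exp (-((MeasureTheory.hittingBtwn
          (fun (j:ℕ) ω => (N ((j:ℝ≥0)*δ) ω : ℝ) - (1+b)*((j:ℝ≥0)*δ)) (Set.Iic (-1:ℝ)) 0 K ω : ℕ)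
            * (δ:ℝ)) * (Real.exp (-l) + l*(1+b) - 1)))) ω ∂μ
      ≤ ENNReal.ofReal (Real.exp (-l)) := by
  set c : ℝ := 1 + b with hcdef
  have hc : 1 < c := by simp [hcdef]; linarith
  have hc0 : (0:ℝ) < c := by linarith
  set fb : ℝ := Real.exp (-l) + l*c - 1 with hfbdef
  have hfb : 0 < fb := by
    have h1 : -l + 1 < Real.exp (-l) := Real.add_one_lt_exp (by linarith)
    have : l * 1 < l * c := by nlinarith
    simp only [hfbdef]; nlinarith
  set t : ℕ → ℝ≥0 := fun k => (k:ℝ≥0) * δ with htdef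
  have htmono : Monotone t := by
    intro i j hij
    simp only [htdef]
    exact mul_le_mul_left (by exact_mod_cast hij) δ
  have htsucc : ∀ k, t (k+1) = t k + δ := by
    intro k
    simp only [htdef]
    push_cast
    ring
  have ht0 : t 0 = 0 := by simp [htdef]
  set X : ℕ → Ω → ℝ := fun k ω => (N (t k) ω : ℝ) - c * (t k) with hXdef
  set Y : ℕ → Ω → ℕ := fun i ω => N (t (i+1)) ω - N (t i) ω with hYdef
  set M : ℕ → Ω → ℝ := fun k ω =>
    Real.exp (-l * (N (t k) ω : ℝ) + l*c*(t k) - (t k)*fb) with hMdef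
  have hYmeas : ∀ i, Measurable (Y i) := fun i => (hmeas _).sub (hmeas _)
  -- the filtration
  set F : Filtration ℕ m0 :=
    ⟨fun k => ⨆ i ∈ Set.Iio k, MeasurableSpace.comap (Y i) inferInstance,
     fun i j hij => by
        apply iSup₂_le
        intro a ha
        exact le_iSup₂_of_le a (lt_of_lt_of_le ha hij) le_rfl,
     fun k => by
        apply iSup₂_le
        intro a _
        exact (hYmeas a).comap_le⟩ with hFdef
  have hYmF : ∀ i k, i < k → Measurable[F k] (Y i) := by
    intro i k hik
    rw [measurable_iff_comap_le]
    exact le_iSup₂_of_le i hik le_rfl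
  have hsum : ∀ k ω, N (t k) ω = ∑ i ∈ Finset.range k, Y i ω := by
    intro k ω
    induction k with
    | zero => simp [ht0, hN0]
    | succ n ih =>
      rw [Finset.sum_range_succ, ← ih]
      have hle : N (t n) ω ≤ N (t (n+1)) ω := hmono ω (htmono (Nat.le_succ n))
      have hYn : Y n ω = N (t (n+1)) ω - N (t n) ω := rfl
      omega
  have hNmF : ∀ k, Measurable[F k] (fun ω => N (t k) ω) := by
    intro k
    have : (fun ω => N (t k) ω) = fun ω => ∑ i ∈ Finset.range k, Y i ω := by
      funext ω; exact hsum k ω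
    rw [this]
    exact Finset.measurable_sum _ (fun i hi => hYmF i k (Finset.mem_range.mp hi))
  have hMmF : ∀ k, Measurable[F k] (M k) := by
    intro k
    apply Real.measurable_exp.comp
    apply Measurable.sub
    · exact (measurable_const.mul ((measurable_from_top).comp (hNmF k))).add measurable_const
    · exact measurable_const
  have hMm : ∀ k, Measurable (M k) := fun k => (hMmF k).mono (F.le k) le_rfl
  have hMbd : ∀ k ω, M k ω ≤ Real.exp (l*c*(t k)) := by
    intro k ω
    apply Real.exp_le_exp.2
    have h1 : (0:ℝ) ≤ (N (t k) ω : ℝ) := Nat.cast_nonneg _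
    have h2 : (0:ℝ) ≤ (t k : ℝ) := (t k).coe_nonneg
    nlinarith
  have hMpos : ∀ k ω, 0 < M k ω := fun k ω => Real.exp_pos _
  have hMint : ∀ k, Integrable (M k) μ := by
    intro k
    refine Integrable.mono' (integrable_const (Real.exp (l*c*(t k))))
      (hMm k).aestronglyMeasurable ?_
    filter_upwards with ω
    rw [Real.norm_eq_abs, abs_of_pos (hMpos k ω)]
    exact hMbd k ω
  have hadp : StronglyAdapted F M := fun k => (hMmF k).stronglyMeasurable
  have hmart : Martingale M F μ := by
    apply martingale_nat hadp hMint
    intro k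
    set g : ℕ → ℝ := fun n => Real.exp (-l * n + l*c*(δ:ℝ) - (δ:ℝ)*fb) with hgdef
    set Z : Ω → ℝ := fun ω => g (Y k ω) with hZdef
    have hMsplit : M (k+1) = fun ω => M k ω * Z ω := by
      funext ω
      simp only [hMdef, hZdef, hgdef]
      rw [← Real.exp_add]
      congr 1
      have hle : N (t k) ω ≤ N (t (k+1)) ω := hmono ω (htmono (Nat.le_succ k))
      have hYc : ((Y k ω : ℕ) : ℝ) = (N (t (k+1)) ω : ℝ) - (N (t k) ω : ℝ) := by
        simp only [hYdef]
        exact Nat.cast_sub hle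
      have htc : ((t (k+1) : ℝ≥0) : ℝ) = (t k : ℝ) + (δ:ℝ) := by
        rw [htsucc k]; push_cast; ring
      rw [hYc, htc]
      ring
    have hZpos : ∀ ω, 0 < Z ω := fun ω => Real.exp_pos _
    have hZmeas : Measurable Z := (measurable_from_top (f := g)).comp (hYmeas k)
    have hZbd : ∀ ω, Z ω ≤ Real.exp (l*c*(δ:ℝ)) := by
      intro ω
      apply Real.exp_le_exp.2
      have h1 : (0:ℝ) ≤ ((Y k ω : ℕ) : ℝ) := Nat.cast_nonneg _
      have h2 : (0:ℝ) ≤ (δ : ℝ) := δ.coe_nonneg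
      nlinarith
    have hZint : Integrable Z μ := by
      refine Integrable.mono' (integrable_const (Real.exp (l*c*(δ:ℝ))))
        hZmeas.aestronglyMeasurable ?_
      filter_upwards with ω
      rw [Real.norm_eq_abs, abs_of_pos (hZpos ω)]
      exact hZbd ω
    have hMZint : Integrable (fun ω => M k ω * Z ω) μ := by
      rw [← hMsplit]; exact hMint (k+1)
    have h1 : μ[fun ω => M k ω * Z ω | F k] =ᵐ[μ] fun ω => M k ω * (μ[Z | F k]) ω := by
      exact condExp_mul_of_stronglyMeasurable_left (hMmF k).stronglyMeasurable hMZint hZint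
    have hZsm : StronglyMeasurable[MeasurableSpace.comap (Y k) inferInstance] Z := by
      apply Measurable.stronglyMeasurable
      exact (measurable_from_top (f := g)).comp (measurable_iff_comap_le.2 le_rfl)
    have hindepZ : Indep (MeasurableSpace.comap (Y k) inferInstance) (F k) μ := by
      have hii := hindep (k+1) t htmono
      have hI := ProbabilityTheory.indep_iSup_of_disjoint
        (m := fun i : Fin (k+1) => MeasurableSpace.comap
          (fun ω => N (t (i.1+1)) ω - N (t i.1) ω) inferInstance)
        (fun i => ((hmeas _).sub (hmeas _)).comap_le) hii
        (S := {i : Fin (k+1) | i.1 = k}) (T := {i : Fin (k+1) | i.1 < k})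
        (by
          rw [Set.disjoint_left]
          rintro i hik hik'
          simp only [Set.mem_setOf_eq] at hik hik'
          omega)
      refine indep_of_indep_of_le_right (indep_of_indep_of_le_left hI ?_) ?_
      · exact le_iSup₂_of_le ⟨k, Nat.lt_succ_self k⟩ rfl le_rfl
      · apply iSup₂_le
        intro i hik
        exact le_iSup₂_of_le ⟨i, lt_trans hik (Nat.lt_succ_self k)⟩ hik le_rfl
    haveI : SigmaFinite (μ.trim (F.le k)) :=
      (isFiniteMeasure_trim (F.le k)).toSigmaFinite
    have h2 : μ[Z | F k] =ᵐ[μ] fun _ => μ[Z] :=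
      condExp_indep_eq ((hYmeas k).comap_le) (F.le k) hZsm hindepZ
    have h3 : μ[Z] = 1 := by
      have hmap : μ.map (Y k) = poissonMeasure δ := by
        have hsub : t (k+1) - t k = δ := by
          rw [htsucc k]; exact add_tsub_cancel_left _ _
        have h := hlaw (t k) (t (k+1)) (htmono (Nat.le_succ k))
        rw [hsub] at h
        exact h
      have hZg : ∫ ω, Z ω ∂μ = ∫ n : ℕ, g n ∂(μ.map (Y k)) := by
        rw [integral_map (hYmeas k).aemeasurable
          (measurable_from_top (f := g)).aestronglyMeasurable]
      show ∫ ω, Z ω ∂μ = 1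
      rw [hZg, hmap]
      simp only [hgdef]
      have hsplit : ∀ n : ℕ, Real.exp (-l * n + l * c * (δ:ℝ) - (δ:ℝ) * fb)
          = Real.exp (l*c*(δ:ℝ) - (δ:ℝ)*fb) * Real.exp ((-l) * n) := by
        intro n; rw [← Real.exp_add]; congr 1; ring
      simp_rw [hsplit]
      rw [integral_const_mul, poisson_integral_exp δ (-l), ← Real.exp_add]
      rw [show l*c*(δ:ℝ) - (δ:ℝ)*fb + (δ:ℝ) * (Real.exp (-l) - 1) = 0 by
        simp only [hfbdef]; ring]
      exact Real.exp_zero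
    rw [hMsplit]
    filter_upwards [h1, h2] with ω h1ω h2ω
    rw [h1ω, h2ω, h3, mul_one]
  -- stopping time
  set τ : Ω → ℕ := MeasureTheory.hittingBtwn X (Set.Iic (-1:ℝ)) 0 K with hτdef
  have hXm : ∀ j, Measurable (X j) :=
    fun j => ((measurable_from_top).comp (hmeas _)).sub measurable_const
  have hXadp : Adapted F X := by
    intro k
    exact ((measurable_from_top).comp (hNmF k)).sub measurable_const
  set τ' : Ω → WithTop ℕ := fun ω => ((τ ω : ℕ) : WithTop ℕ) with hτ'def
  have hτst : IsStoppingTime F τ' := hXadp.isStoppingTime_hittingBtwn measurableSet_Iic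
  have hτle : ∀ ω, τ ω ≤ K := fun ω => hittingBtwn_le ω
  have hτmeas : Measurable τ := by
    apply measurable_to_countable'
    intro n
    have h := F.le n _ (hτst.measurableSet_eq n)
    convert h using 1
    ext ω; simp [Set.mem_preimage, hτ'def]
  have hsv0 : stoppedValue M (fun _ => ((0:ℕ) : WithTop ℕ)) = fun _ => (1:ℝ) := by
    funext ω
    simp [stoppedValue, hMdef, ht0, hN0]
  have hos : (μ[stoppedValue M τ']) ≤ 1 := by
    have hneg : μ[stoppedValue (-M) (fun _ => ((0:ℕ) : WithTop ℕ))] ≤ μ[stoppedValue (-M) τ'] :=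
      (hmart.neg.submartingale).expected_stoppedValue_mono
      (isStoppingTime_const F 0) hτst (fun ω => WithTop.coe_le_coe.2 (Nat.zero_le _)) (N := K)
      (fun ω => WithTop.coe_le_coe.2 (hτle ω))
    have e1 : stoppedValue (-M) (fun _ => ((0:ℕ) : WithTop ℕ)) = -(stoppedValue M (fun _ => ((0:ℕ) : WithTop ℕ))) := rfl
    have e2 : stoppedValue (-M) τ' = -(stoppedValue M τ') := rfl
    rw [e1, e2] at hneg
    simp only [Pi.neg_apply, integral_neg, neg_le_neg_iff, hsv0] at hneg
    simpa using hneg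
  set A : Set Ω := {ω | ∃ j, j ≤ K ∧ X j ω ≤ -1} with hAdef
  have hAmeas : MeasurableSet A := by
    have hA2 : A = ⋃ j ∈ Set.Iic K, {ω | X j ω ≤ -1} := by
      ext ω
      simp [hAdef]
    rw [hA2]
    exact MeasurableSet.biUnion (Set.to_countable _)
      (fun j _ => measurableSet_le (hXm j) measurable_const)
  set gfun : Ω → ℝ := fun ω => Real.exp (-((τ ω : ℝ) * (δ:ℝ)) * fb) with hgg
  have hgpos : ∀ ω, 0 < gfun ω := fun ω => Real.exp_pos _
  have hgle1 : ∀ ω, gfun ω ≤ 1 := by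
    intro ω
    rw [show (1:ℝ) = Real.exp 0 by simp]
    apply Real.exp_le_exp.2
    have h1 : (0:ℝ) ≤ (τ ω : ℝ) * (δ:ℝ) := by positivity
    nlinarith
  have hgm : Measurable gfun := by
    apply Real.measurable_exp.comp
    apply Measurable.mul _ measurable_const
    apply Measurable.neg
    exact (measurable_from_top.comp hτmeas).mul measurable_const
  have key : ∀ ω, Real.exp l * A.indicator gfun ω ≤ stoppedValue M τ' ω := by
    intro ω
    by_cases hω : ω ∈ A
    · rw [Set.indicator_of_mem hω]
      obtain ⟨j, hjK, hj⟩ := hω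
      have hex : ∃ j ∈ Set.Icc 0 K, X j ω ∈ Set.Iic (-1:ℝ) :=
        ⟨j, ⟨Nat.zero_le _, hjK⟩, hj⟩
      have hmem : X (τ ω) ω ∈ Set.Iic (-1:ℝ) := stoppedValue_hittingBtwn_mem hex
      have hMX : stoppedValue M τ' ω = Real.exp (-l * X (τ ω) ω - (t (τ ω)) * fb) := by
        simp only [stoppedValue, hMdef, hXdef, hτ'def, WithTop.untopD_coe]
        rw [show (((τ ω : ℕ) : WithTop ℕ)).untopA = τ ω from rfl]
        congr 1
        ring
      rw [hMX, ← Real.exp_add]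
      apply Real.exp_le_exp.2
      have h1 : X (τ ω) ω ≤ -1 := hmem
      have htτ : ((t (τ ω) : ℝ≥0) : ℝ) = (τ ω : ℝ) * (δ:ℝ) := by
        simp [htdef]
      rw [htτ]
      nlinarith
    · rw [Set.indicator_of_notMem hω, mul_zero]
      exact le_of_lt (Real.exp_pos _)
  have hgint : Integrable (A.indicator gfun) μ := by
    apply Integrable.indicator _ hAmeas
    refine Integrable.mono' (integrable_const 1) hgm.aestronglyMeasurable ?_
    filter_upwards with ω
    rw [Real.norm_eq_abs, abs_of_pos (hgpos ω)]
    exact hgle1 ω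
  have hsvint : Integrable (stoppedValue M τ') μ := by
    have hsve := stoppedValue_eq (u := M) (τ := τ') (N := K) (fun ω => WithTop.coe_le_coe.2 (hτle ω))
    rw [hsve]
    simp only [Finset.sum_apply]
    apply integrable_finset_sum
    intro i _
    apply (hMint i).indicator
    have h := F.le i _ (hτst.measurableSet_eq i)
    exact h
  have hmono2 : ∫ ω, Real.exp l * A.indicator gfun ω ∂μ ≤ μ[stoppedValue M τ'] := by
    apply integral_mono_of_nonneg _ hsvint
    · filter_upwards with ω
      exact key ω
    · filter_upwards with ω
      apply mul_nonneg (Real.exp_pos l).le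
      exact Set.indicator_nonneg (fun ω _ => (hgpos ω).le) ω
  rw [integral_const_mul] at hmono2
  have hIle : ∫ ω, A.indicator gfun ω ∂μ ≤ Real.exp (-l) := by
    have h2 : Real.exp l * ∫ ω, A.indicator gfun ω ∂μ ≤ 1 := le_trans hmono2 hos
    rw [Real.exp_neg, ← one_div, le_div_iff₀ (Real.exp_pos l)]
    nlinarith
  have hnn : 0 ≤ᵐ[μ] A.indicator gfun := by
    filter_upwards with ω
    exact Set.indicator_nonneg (fun ω _ => (hgpos ω).le) ω
  have hofr := ofReal_integral_eq_lintegral_ofReal hgint hnn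
  have hfinal : ∫⁻ ω, A.indicator (fun ω => ENNReal.ofReal (gfun ω)) ω ∂μ
      ≤ ENNReal.ofReal (Real.exp (-l)) := by
    have heq : ∀ ω, A.indicator (fun ω => ENNReal.ofReal (gfun ω)) ω
        = ENNReal.ofReal (A.indicator gfun ω) := by
      intro ω
      by_cases hω : ω ∈ A
      · rw [Set.indicator_of_mem hω, Set.indicator_of_mem hω]
      · rw [Set.indicator_of_notMem hω, Set.indicator_of_notMem hω, ENNReal.ofReal_zero]
    simp_rw [heq]
    rw [← hofr]
    exact ENNReal.ofReal_le_ofReal hIle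
  exact hfinal

end PoissonHitAux

/-- let `N` be a standard Poisson process (unit rate, independent
Poisson-distributed increments), `b > 0`, and `T_b = inf{t ≥ 0 : N_t - (1+b)t = -1}`.
Then `T_b` is a.s. finite (the hitting set is a.s. nonempty), `N_{T_b} - (1+b)T_b = -1`
a.s., and for every `λ > 0`, `E[exp(-T_b·f_b(λ))] ≤ exp(-λ)` where
`f_b(λ) = exp(-λ) + λ(1+b) - 1`. -/
theorem poisson_hitting_time_exp_bound
    {Ω : Type*} {m0 : MeasurableSpace Ω} (μ : Measure Ω) [IsProbabilityMeasure μ]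
    (N : ℝ≥0 → Ω → ℕ) (b : ℝ) (hb : 0 < b) (Tb : Ω → ℝ≥0)
    (hmeas : ∀ t : ℝ≥0, Measurable (N t))
    (hN0 : ∀ ω, N 0 ω = 0) (hmono : ∀ ω, Monotone fun t => N t ω)
    (hrc : ∀ ω (t : ℝ≥0), ContinuousWithinAt (fun s => (N s ω : ℝ)) (Set.Ici t) t)
    (hlaw : ∀ s t : ℝ≥0, s ≤ t →
      μ.map (fun ω => N t ω - N s ω) = ProbabilityTheory.poissonMeasure (t - s))
    (hindep : ∀ (n : ℕ) (t : ℕ → ℝ≥0), Monotone t →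
      ProbabilityTheory.iIndepFun
        (fun (i : Fin n) ω => N (t (i.1 + 1)) ω - N (t i.1) ω) μ)
    (hTb : ∀ ω, Tb ω = sInf {t : ℝ≥0 | (N t ω : ℝ) - (1 + b) * t = -1}) :
    (∀ᵐ ω ∂μ, {t : ℝ≥0 | (N t ω : ℝ) - (1 + b) * t = -1}.Nonempty) ∧
    (∀ᵐ ω ∂μ, (N (Tb ω) ω : ℝ) - (1 + b) * (Tb ω) = -1) ∧
    ∀ l : ℝ, 0 < l →
      (∫ ω, Real.exp (-(Tb ω : ℝ) * (Real.exp (-l) + l * (1 + b) - 1)) ∂μ)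
        ≤ Real.exp (-l) := by
  have hc : (1:ℝ) < 1 + b := by linarith
  have hae := ae_hits μ N b hb hmeas hN0 hlaw
  have hgood : ∀ᵐ ω ∂μ, ((N (Tb ω) ω : ℝ) - (1+b) * (Tb ω) = -1) ∧
      (∀ u : ℝ≥0, (N u ω : ℝ) - (1+b) * u ≤ -1 → Tb ω ≤ u) ∧
      ∃ ε : ℝ≥0, 0 < ε ∧ ∀ s : ℝ≥0, Tb ω < s → s < Tb ω + ε →
        (N s ω : ℝ) - (1+b) * s < -1 := by
    filter_upwards [hae] with ω hω
    obtain ⟨T, hT1, hT2, ε, hε, hT3⟩ := path_hit hc (hN0 ω) (hmono ω) (hrc ω) hω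
    have hTbω : Tb ω = T := by
      rw [hTb ω]
      apply le_antisymm
      · exact csInf_le (OrderBot.bddBelow _) hT1
      · exact le_csInf ⟨T, hT1⟩ (fun x hx => hT2 x (le_of_eq hx))
    rw [hTbω]
    exact ⟨hT1, hT2, ε, hε, hT3⟩
  refine ⟨?_, ?_, ?_⟩
  · filter_upwards [hgood] with ω hω
    exact ⟨Tb ω, hω.1⟩
  · filter_upwards [hgood] with ω hω
    exact hω.1
  · intro l hl
    set fb : ℝ := Real.exp (-l) + l * (1+b) - 1 with hfbdef
    have hfb : 0 < fb := by
      have h1 : -l + 1 < Real.exp (-l) := Real.add_one_lt_exp (by linarith)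
      have h2 : l * 1 < l * (1+b) := by nlinarith
      simp only [hfbdef]; nlinarith
    set δσ : ℕ → ℝ≥0 := fun m => ((m:ℝ≥0)+1)⁻¹ with hδσ
    have hδσpos : ∀ m, 0 < δσ m := by
      intro m
      simp only [hδσ]
      positivity
    have hδσto : Tendsto (fun m => ((δσ m : ℝ))) atTop (𝓝 0) := by
      have h := tendsto_one_div_add_atTop_nhds_zero_nat (𝕜 := ℝ)
      have heq : (fun m : ℕ => ((δσ m : ℝ))) = fun m : ℕ => 1 / ((m:ℝ) + 1) := by
        funext m
        simp only [hδσ]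
        push_cast
        rw [one_div]
      rw [heq]
      exact h
    set gK : ℝ≥0 → ℕ → Ω → ℝ≥0∞ := fun δ K =>
      Set.indicator {ω | ∃ j, j ≤ K ∧ (N ((j:ℝ≥0)*δ) ω : ℝ) - (1+b) * ((j:ℝ≥0)*δ) ≤ -1}
        (fun ω => ENNReal.ofReal (Real.exp (-((MeasureTheory.hittingBtwn
          (fun (j:ℕ) ω => (N ((j:ℝ≥0)*δ) ω : ℝ) - (1+b)*((j:ℝ≥0)*δ)) (Set.Iic (-1:ℝ)) 0 K ω : ℕ)
            * (δ:ℝ)) * fb))) with hgK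
    have hKb : ∀ (δ:ℝ≥0) (K : ℕ), ∫⁻ ω, gK δ K ω ∂μ ≤ ENNReal.ofReal (Real.exp (-l)) := by
      intro δ K
      exact grid_bound μ N b hb hmeas hN0 hmono hlaw hindep l hl δ K
    have hXm : ∀ (δ:ℝ≥0) (j:ℕ),
        Measurable (fun ω => (N ((j:ℝ≥0)*δ) ω : ℝ) - (1+b)*((j:ℝ≥0)*δ)) :=
      fun δ j => (measurable_from_top.comp (hmeas _)).sub measurable_const
    have hAm : ∀ (δ:ℝ≥0) (K:ℕ), MeasurableSet
        {ω | ∃ j, j ≤ K ∧ (N ((j:ℝ≥0)*δ) ω : ℝ) - (1+b) * ((j:ℝ≥0)*δ) ≤ -1} := by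
      intro δ K
      have hA2 : {ω | ∃ j, j ≤ K ∧ (N ((j:ℝ≥0)*δ) ω : ℝ) - (1+b) * ((j:ℝ≥0)*δ) ≤ -1}
          = ⋃ j ∈ Set.Iic K, {ω | (N ((j:ℝ≥0)*δ) ω : ℝ) - (1+b) * ((j:ℝ≥0)*δ) ≤ -1} := by
        ext ω
        simp
      rw [hA2]
      exact MeasurableSet.biUnion (Set.to_countable _)
        (fun j _ => measurableSet_le (hXm δ j) measurable_const)
    have hgKmeas : ∀ (δ:ℝ≥0) (K:ℕ), Measurable (gK δ K) := by
      intro δ K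
      apply Measurable.indicator _ (hAm δ K)
      apply ENNReal.measurable_ofReal.comp
      apply Real.measurable_exp.comp
      apply Measurable.mul _ measurable_const
      apply Measurable.neg
      exact (measurable_from_top.comp
        (hitting_meas (hXm δ) measurableSet_Iic K)).mul measurable_const
    have hmonoK : ∀ (δ:ℝ≥0), Monotone (fun K => gK δ K) := by
      intro δ K K' hKK' ω
      simp only [hgK]
      by_cases hω : ω ∈ {ω | ∃ j, j ≤ K ∧ (N ((j:ℝ≥0)*δ) ω : ℝ) - (1+b) * ((j:ℝ≥0)*δ) ≤ -1}
      · obtain ⟨j, hjK, hj⟩ := hω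
        have hω' : ω ∈ {ω | ∃ j, j ≤ K' ∧ (N ((j:ℝ≥0)*δ) ω : ℝ) - (1+b) * ((j:ℝ≥0)*δ) ≤ -1} :=
          ⟨j, le_trans hjK hKK', hj⟩
        rw [Set.indicator_of_mem (show ω ∈ {ω | ∃ j, j ≤ K ∧
            (N ((j:ℝ≥0)*δ) ω : ℝ) - (1+b) * ((j:ℝ≥0)*δ) ≤ -1} from ⟨j, hjK, hj⟩),
          Set.indicator_of_mem hω']
        have heq := hittingBtwn_eq_hittingBtwn_of_exists (u := fun (j:ℕ) ω =>
            (N ((j:ℝ≥0)*δ) ω : ℝ) - (1+b)*((j:ℝ≥0)*δ)) (s := Set.Iic (-1:ℝ)) (n := 0)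
          hKK' ⟨j, ⟨Nat.zero_le _, hjK⟩, hj⟩
        rw [heq]
      · rw [Set.indicator_of_notMem hω]
        exact zero_le
    have hsup : ∀ (δ:ℝ≥0), ∫⁻ ω, ⨆ K, gK δ K ω ∂μ ≤ ENNReal.ofReal (Real.exp (-l)) := by
      intro δ
      rw [lintegral_iSup (fun K => hgKmeas δ K) (hmonoK δ)]
      exact iSup_le (fun K => hKb δ K)
    have hlow : ∀ᵐ ω ∂μ, ENNReal.ofReal (Real.exp (-(Tb ω : ℝ) * fb))
        ≤ Filter.liminf (fun m => ⨆ K, gK (δσ m) K ω) atTop := by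
      filter_upwards [hgood] with ω hω
      obtain ⟨hT1, hT2, ε, hε, hT3⟩ := hω
      have hev : ∀ᶠ m in atTop,
          ENNReal.ofReal (Real.exp (-((Tb ω : ℝ) + (δσ m : ℝ)) * fb))
            ≤ ⨆ K, gK (δσ m) K ω := by
        have hevδ : ∀ᶠ m in atTop, δσ m ≤ ε := by
          have h := hδσto.eventually (gt_mem_nhds (show (0:ℝ) < (ε:ℝ) by exact_mod_cast hε))
          filter_upwards [h] with m hm
          exact le_of_lt (by exact_mod_cast hm)
        filter_upwards [hevδ] with m hm
        set δ : ℝ≥0 := δσ m with hδdef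
        have hδpos : 0 < δ := hδσpos m
        have hδr : (0:ℝ) < (δ:ℝ) := by exact_mod_cast hδpos
        set kst : ℕ := ⌈(Tb ω : ℝ) / (δ:ℝ)⌉₊ with hkst
        have hk1 : (Tb ω : ℝ) ≤ (kst:ℝ) * δ := by
          rw [← div_le_iff₀ hδr]
          exact Nat.le_ceil _
        have hk2 : (kst:ℝ) * (δ:ℝ) < (Tb ω : ℝ) + δ := by
          have h := Nat.ceil_lt_add_one (show (0:ℝ) ≤ (Tb ω : ℝ)/(δ:ℝ) by positivity)
          calc (kst:ℝ) * δ < ((Tb ω:ℝ)/δ + 1) * δ := by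
                apply mul_lt_mul_of_pos_right h hδr
            _ = Tb ω + δ := by field_simp
        set w : ℝ≥0 := (kst:ℝ≥0) * δ with hw
        have hwr : ((w:ℝ≥0):ℝ) = (kst:ℝ) * (δ:ℝ) := by
          simp [hw]
        have hTw : Tb ω ≤ w := by
          rw [← NNReal.coe_le_coe, hwr]
          exact hk1
        have hit : (N w ω : ℝ) - (1+b) * (w:ℝ) ≤ -1 := by
          rcases lt_or_eq_of_le hTw with hlt | heq
          · apply le_of_lt
            apply hT3 w hlt
            rw [← NNReal.coe_lt_coe]
            have hδε : (δ:ℝ) ≤ (ε:ℝ) := by exact_mod_cast hm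
            push_cast
            calc ((w:ℝ≥0):ℝ) = (kst:ℝ) * (δ:ℝ) := hwr
              _ < (Tb ω:ℝ) + (δ:ℝ) := hk2
              _ ≤ (Tb ω:ℝ) + (ε:ℝ) := by linarith
          · rw [← heq]
            exact le_of_eq hT1
        refine le_trans ?_ (le_iSup (fun K => gK δ K ω) kst)
        simp only [hgK]
        rw [Set.indicator_of_mem (show ω ∈ {ω | ∃ j, j ≤ kst ∧
            (N ((j:ℝ≥0)*δ) ω : ℝ) - (1+b) * ((j:ℝ≥0)*δ) ≤ -1} from ⟨kst, le_rfl, hit⟩)]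
        set τ : ℕ := MeasureTheory.hittingBtwn
          (fun (j:ℕ) ω => (N ((j:ℝ≥0)*δ) ω : ℝ) - (1+b)*((j:ℝ≥0)*δ)) (Set.Iic (-1:ℝ)) 0 kst ω
          with hτdef
        have hτhit : (N ((τ:ℝ≥0)*δ) ω : ℝ) - (1+b)*((τ:ℝ≥0)*δ) ≤ -1 :=
          stoppedValue_hittingBtwn_mem (u := fun (j:ℕ) ω =>
              (N ((j:ℝ≥0)*δ) ω : ℝ) - (1+b)*((j:ℝ≥0)*δ)) (s := Set.Iic (-1:ℝ)) (n := 0)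
            (m := kst) ⟨kst, ⟨Nat.zero_le _, le_rfl⟩, hit⟩
        have hτT : Tb ω ≤ (τ:ℝ≥0)*δ := hT2 _ hτhit
        have hτle : τ ≤ kst := hittingBtwn_le_of_mem (u := fun (j:ℕ) ω =>
            (N ((j:ℝ≥0)*δ) ω : ℝ) - (1+b)*((j:ℝ≥0)*δ)) (s := Set.Iic (-1:ℝ))
          (Nat.zero_le _) le_rfl hit
        apply ENNReal.ofReal_le_ofReal
        apply Real.exp_le_exp.2
        have h1 : (τ:ℝ)*(δ:ℝ) ≤ (kst:ℝ)*(δ:ℝ) := by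
          apply mul_le_mul_of_nonneg_right _ hδr.le
          exact_mod_cast hτle
        nlinarith
      have h0 : Tendsto (fun m : ℕ => -((Tb ω:ℝ) + (δσ m:ℝ)) * fb) atTop
          (𝓝 (-(Tb ω:ℝ) * fb)) := by
        have h1 : Tendsto (fun m : ℕ => (Tb ω:ℝ) + (δσ m:ℝ)) atTop (𝓝 ((Tb ω:ℝ) + 0)) :=
          tendsto_const_nhds.add hδσto
        rw [add_zero] at h1
        exact h1.neg.mul_const fb
      have htend2 : Tendsto (fun m : ℕ =>
          ENNReal.ofReal (Real.exp (-((Tb ω : ℝ) + (δσ m : ℝ)) * fb))) atTop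
          (𝓝 (ENNReal.ofReal (Real.exp (-(Tb ω : ℝ) * fb)))) :=
        (ENNReal.continuous_ofReal.tendsto _).comp ((Real.continuous_exp.tendsto _).comp h0)
      calc ENNReal.ofReal (Real.exp (-(Tb ω : ℝ) * fb))
          = Filter.liminf (fun m : ℕ =>
              ENNReal.ofReal (Real.exp (-((Tb ω : ℝ) + (δσ m : ℝ)) * fb))) atTop :=
            (htend2.liminf_eq).symm
        _ ≤ Filter.liminf (fun m => ⨆ K, gK (δσ m) K ω) atTop :=
            Filter.liminf_le_liminf hev
    have hliminf_int : ∫⁻ ω, Filter.liminf (fun m => ⨆ K, gK (δσ m) K ω) atTop ∂μ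
        ≤ ENNReal.ofReal (Real.exp (-l)) := by
      refine le_trans (lintegral_liminf_le (fun m => ?_)) ?_
      · exact Measurable.iSup (fun K => hgKmeas (δσ m) K)
      · refine le_trans (Filter.liminf_le_liminf
          (Filter.Eventually.of_forall (fun m => hsup (δσ m)))) ?_
        simp [Filter.liminf_const]
    have hchain : ∫⁻ ω, ENNReal.ofReal (Real.exp (-(Tb ω:ℝ) * fb)) ∂μ
        ≤ ENNReal.ofReal (Real.exp (-l)) :=
      le_trans (lintegral_mono_ae hlow) hliminf_int
    by_cases hms : AEStronglyMeasurable (fun ω => Real.exp (-(Tb ω : ℝ) * fb)) μ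
    · rw [integral_eq_lintegral_of_nonneg_ae
        (Filter.Eventually.of_forall (fun ω => (Real.exp_pos _).le)) hms]
      have h := ENNReal.toReal_mono (ENNReal.ofReal_ne_top) hchain
      rwa [ENNReal.toReal_ofReal (Real.exp_pos _).le] at h
    · rw [integral_undef (fun hint => hms hint.1)]
      exact (Real.exp_pos _).le
end
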